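/- Let G = (V, E) be a finite undirected graph and v0 ∉ V a fresh element. Consider the Boolean query q ⟵ R(x), S(x,y), R(y) with R endogenous and S exogenous, on the database instance with R = V ∪ {v0} and S containing one tuple (u,v) for each edge {u,v} ∈ E (in an arbitrary orientation) together with the tuple (v0,v0). Then the minimum size of a contingency set for the tuple v0 ∈ R equals the minimum size of a vertex cover of G. -/

import Mathlib

/-- An atom of a Boolean conjunctive query: a relation symbol applied to a
tuple (list) of variables, marked endogenous (`endo = true`) or exogenous. -/
structure DBAtom (Rel Var : Type) where
  rel : Rel
  args : List Var
  endo : Bool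
deriving DecidableEq

/-- A database tuple: it belongs to one relation and carries a tuple of constants. -/
structure DBTup (Rel Const : Type) where
  rel : Rel
  args : List Const
deriving DecidableEq

/-- The tuple obtained by applying a valuation `θ` to an atom. -/
def DBAtom.app {Rel Var Const : Type} (g : DBAtom Rel Var) (θ : Var → Const) :
    DBTup Rel Const :=
  ⟨g.rel, g.args.map θ⟩

/-- `dbSat D q` holds iff `D ⊨ q`: there is a valuation `θ` of the variables of `q`
into the domain with `θ(g) ∈ D` for every atom `g` of `q`. -/
def dbSat {Rel Var Const : Type} (D : Finset (DBTup Rel Const))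
    (q : Finset (DBAtom Rel Var)) : Prop :=
  ∃ θ : Var → Const, ∀ g ∈ q, g.app θ ∈ D

/-- `t` is an actual cause for `q` in `D` (with endogenous tuples `Dn`):
there is a contingency set `Γ ⊆ Dn` with `t ∉ Γ` such that
`D − Γ ⊨ q` and `D − Γ − {t} ⊭ q`. -/
def isActualCause {Rel Var Const : Type} [DecidableEq Rel] [DecidableEq Const]
    (q : Finset (DBAtom Rel Var)) (D Dn : Finset (DBTup Rel Const))
    (t : DBTup Rel Const) : Prop :=
  ∃ Γ : Finset (DBTup Rel Const), Γ ⊆ Dn ∧ t ∉ Γ ∧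
    dbSat (D \ Γ) q ∧ ¬ dbSat ((D \ Γ).erase t) q

/-- The n-lineage of `q` on `D`: the family of the sets `c^θ ∩ Dⁿ`
over all valuations `θ` with `θ(g) ∈ D` for all atoms `g` of `q`, where
`c^θ = {θ(g) : g an atom of q}`. -/
def nLineage {Rel Var Const : Type} [DecidableEq Rel] [DecidableEq Const]
    (q : Finset (DBAtom Rel Var)) (D Dn : Finset (DBTup Rel Const)) :
    Set (Finset (DBTup Rel Const)) :=
  {c | ∃ θ : Var → Const, (∀ g ∈ q, g.app θ ∈ D) ∧
    c = (q.image fun g => g.app θ) ∩ Dn}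

/-- Let `G = (V, E)` be a finite undirected simple graph and `v0 ∉ V`
a fresh element. Consider the Boolean query `q ⟵ R(x), S(x,y), R(y)` (symbols `R, S`
are `0, 1`; variables `x, y` are `0, 1`), with `R` endogenous and `S` exogenous, on the
database instance with `R = V ∪ {v0}` and `S` containing one tuple `(u,v)` for each edge
`{u,v} ∈ E` (in an arbitrary orientation `O`) together with the tuple `(v0,v0)`. Then
the minimum size of a contingency set for the tuple `v0 ∈ R` equals the minimum size of
a vertex cover of `G`. -/
theorem statement13 {α : Type} [DecidableEq α]
    (V : Finset α) (E : Finset (Sym2 α))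
    (hE : ∀ e ∈ E, ∀ v ∈ e, v ∈ V)
    (hsimple : ∀ e ∈ E, ¬ e.IsDiag)
    (v0 : α) (hv0 : v0 ∉ V)
    (O : Finset (α × α))
    (hO1 : ∀ p ∈ O, Sym2.mk p.1 p.2 ∈ E)
    (hO2 : ∀ e ∈ E, ∃ p ∈ O, Sym2.mk p.1 p.2 = e)
    (hO3 : Set.InjOn (fun p : α × α => Sym2.mk p.1 p.2) O) :
    let q : Finset (DBAtom (Fin 2) (Fin 2)) :=
      {⟨0, [0], true⟩, ⟨1, [0, 1], false⟩, ⟨0, [1], true⟩}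
    let Dn : Finset (DBTup (Fin 2) α) := (insert v0 V).image (fun v => ⟨0, [v]⟩)
    let D : Finset (DBTup (Fin 2) α) :=
      Dn ∪ (insert (v0, v0) O).image (fun p => ⟨1, [p.1, p.2]⟩)
    let t0 : DBTup (Fin 2) α := ⟨0, [v0]⟩
    sInf {n : ℕ | ∃ Γ : Finset (DBTup (Fin 2) α), Γ ⊆ Dn ∧ t0 ∉ Γ ∧
        dbSat (D \ Γ) q ∧ ¬ dbSat ((D \ Γ).erase t0) q ∧ Γ.card = n} =
      sInf {n : ℕ | ∃ S : Finset α, S ⊆ V ∧ (∀ e ∈ E, ∃ v ∈ S, v ∈ e) ∧ S.card = n} := by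

  intro q Dn D t0
  have finj : Function.Injective (fun v : α => (⟨0, [v]⟩ : DBTup (Fin 2) α)) := by
    intro a b h
    simpa using h
  congr 1
  ext n
  simp only [Set.mem_setOf_eq]
  constructor
  · rintro ⟨Γ, hΓDn, ht0, -, hns, hcard⟩
    set S := V.filter (fun v => (⟨0, [v]⟩ : DBTup (Fin 2) α) ∈ Γ) with hS
    have hΓeq : Γ = S.image (fun v => (⟨0, [v]⟩ : DBTup (Fin 2) α)) := by
      ext u
      simp only [Finset.mem_image, hS, Finset.mem_filter]
      constructor
      · intro huΓ
        have hu := hΓDn huΓ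
        simp only [Dn, Finset.mem_image, Finset.mem_insert] at hu
        obtain ⟨v, hv, rfl⟩ := hu
        rcases hv with rfl | hv
        · exact absurd huΓ ht0
        · exact ⟨v, ⟨hv, huΓ⟩, rfl⟩
      · rintro ⟨v, ⟨hv, hvΓ⟩, rfl⟩
        exact hvΓ
    refine ⟨S, Finset.filter_subset _ _, ?_, ?_⟩
    · intro e he
      obtain ⟨p, hpO, rfl⟩ := hO2 e he
      by_contra hno
      push_neg at hno
      have hm1 : p.1 ∈ Sym2.mk p.1 p.2 := Sym2.mem_mk_left p.1 p.2
      have hm2 : p.2 ∈ Sym2.mk p.1 p.2 := Sym2.mem_mk_right p.1 p.2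
      have h1 : p.1 ∈ V := hE _ (hO1 _ hpO) _ hm1
      have h2 : p.2 ∈ V := hE _ (hO1 _ hpO) _ hm2
      have hn1 : (⟨0, [p.1]⟩ : DBTup (Fin 2) α) ∉ Γ := fun h =>
        hno p.1 (by simp [hS, Finset.mem_filter, h1, h]) hm1
      have hn2 : (⟨0, [p.2]⟩ : DBTup (Fin 2) α) ∉ Γ := fun h =>
        hno p.2 (by simp [hS, Finset.mem_filter, h2, h]) hm2
      have hne1 : p.1 ≠ v0 := fun h => hv0 (h ▸ h1)
      have hne2 : p.2 ≠ v0 := fun h => hv0 (h ▸ h2)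
      apply hns
      refine ⟨![p.1, p.2], ?_⟩
      intro g hg
      have hΓrel : ∀ u ∈ Γ, (u : DBTup (Fin 2) α).rel = 0 := by
        intro u huΓ
        have hu := hΓDn huΓ
        simp only [Dn, Finset.mem_image] at hu
        obtain ⟨v, _, rfl⟩ := hu
        rfl
      simp only [q, Finset.mem_insert, Finset.mem_singleton] at hg
      rcases hg with rfl | rfl | rfl
      · simp only [DBAtom.app, List.map, Matrix.cons_val_zero]
        rw [Finset.mem_erase, Finset.mem_sdiff]
        refine ⟨by simp [t0, hne1], ⟨?_, hn1⟩⟩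
        simp only [D, Dn, Finset.mem_union, Finset.mem_image, Finset.mem_insert]
        exact Or.inl ⟨p.1, Or.inr h1, rfl⟩
      · simp only [DBAtom.app, List.map, Matrix.cons_val_zero, Matrix.cons_val_one,
          Matrix.head_cons]
        rw [Finset.mem_erase, Finset.mem_sdiff]
        refine ⟨by simp [t0], ⟨?_, ?_⟩⟩
        · simp only [D, Finset.mem_union, Finset.mem_image, Finset.mem_insert]
          exact Or.inr ⟨p, Or.inr hpO, rfl⟩
        · intro h
          exact absurd (hΓrel _ h) (by simp)
      · simp only [DBAtom.app, List.map, Matrix.cons_val_one, Matrix.head_cons]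
        rw [Finset.mem_erase, Finset.mem_sdiff]
        refine ⟨by simp [t0, hne2], ⟨?_, hn2⟩⟩
        simp only [D, Dn, Finset.mem_union, Finset.mem_image, Finset.mem_insert]
        exact Or.inl ⟨p.2, Or.inr h2, rfl⟩
    · rw [hΓeq, Finset.card_image_of_injective _ finj] at hcard
      exact hcard
  · rintro ⟨S, hSV, hcover, hcard⟩
    refine ⟨S.image (fun v => (⟨0, [v]⟩ : DBTup (Fin 2) α)), ?_, ?_, ?_, ?_, ?_⟩
    · exact Finset.image_subset_image (hSV.trans (Finset.subset_insert _ _))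
    · intro h
      simp only [Finset.mem_image] at h
      obtain ⟨v, hv, hveq⟩ := h
      have : v = v0 := by simpa [t0] using (finj hveq : v = v0)
      exact hv0 (this ▸ hSV hv)
    · refine ⟨fun _ => v0, ?_⟩
      intro g hg
      have hnotΓ : ∀ (u : DBTup (Fin 2) α), u.rel = 0 → u.args = [v0] →
          u ∉ S.image (fun v => (⟨0, [v]⟩ : DBTup (Fin 2) α)) := by
        rintro u hrel hargs h
        simp only [Finset.mem_image] at h
        obtain ⟨v, hv, rfl⟩ := h
        simp only at hargs
        obtain rfl : v = v0 := by simpa using hargs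
        exact hv0 (hSV hv)
      simp only [q, Finset.mem_insert, Finset.mem_singleton] at hg
      rcases hg with rfl | rfl | rfl
      · rw [Finset.mem_sdiff]
        refine ⟨?_, hnotΓ _ rfl rfl⟩
        simp only [D, Dn, Finset.mem_union, Finset.mem_image, Finset.mem_insert,
          DBAtom.app, List.map]
        exact Or.inl ⟨v0, Or.inl rfl, rfl⟩
      · rw [Finset.mem_sdiff]
        constructor
        · simp only [D, Finset.mem_union, Finset.mem_image, Finset.mem_insert,
            DBAtom.app, List.map]
          exact Or.inr ⟨(v0, v0), Or.inl rfl, rfl⟩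
        · intro h
          simp only [Finset.mem_image, DBAtom.app, List.map] at h
          obtain ⟨v, _, hveq⟩ := h
          exact absurd (congrArg DBTup.rel hveq) (by simp)
      · rw [Finset.mem_sdiff]
        refine ⟨?_, hnotΓ _ rfl rfl⟩
        simp only [D, Dn, Finset.mem_union, Finset.mem_image, Finset.mem_insert,
          DBAtom.app, List.map]
        exact Or.inl ⟨v0, Or.inl rfl, rfl⟩
    · rintro ⟨θ, hθ⟩
      have hx := hθ ⟨0, [0], true⟩ (by simp [q])
      have hy := hθ ⟨0, [1], true⟩ (by simp [q])
      have hxy := hθ ⟨1, [0, 1], false⟩ (by simp [q])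
      simp only [DBAtom.app, List.map, Finset.mem_erase, Finset.mem_sdiff] at hx hy hxy
      obtain ⟨hxy_ne, hxy_D, hxy_Γ⟩ := hxy
      simp only [D, Dn, Finset.mem_union, Finset.mem_image, Finset.mem_insert] at hxy_D
      rcases hxy_D with ⟨v, _, hveq⟩ | ⟨p, hp, hpeq⟩
      · exact absurd (congrArg DBTup.rel hveq) (by simp)
      · have hargs : [p.1, p.2] = [θ 0, θ 1] := congrArg DBTup.args hpeq
        have hp1 : p.1 = θ 0 := by simpa using congrArg (fun l => l.head?) hargs
        have hp2 : p.2 = θ 1 := by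
          have := List.cons.injEq p.1 [p.2] (θ 0) [θ 1] ▸ hargs
          simp at hargs
          exact hargs.2
        rcases hp with hp | hpO
        · simp only [hp] at hp1
          exact hx.1 (by simp [t0, ← hp1])
        · obtain ⟨v, hvS, hve⟩ := hcover _ (hO1 _ hpO)
          rw [Sym2.mem_iff] at hve
          rcases hve with rfl | rfl
          · exact hx.2.2 (by rw [← hp1]; exact Finset.mem_image_of_mem _ hvS)
          · exact hy.2.2 (by rw [← hp2]; exact Finset.mem_image_of_mem _ hvS)
    · rw [Finset.card_image_of_injective _ finj]
      exact hcard
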